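/- Fix α ∈ (0,1). The function S_α is continuously differentiable on ℝ with derivative S_α'. Moreover, S_α' is Lipschitz continuous with constant 2α, and for every v ∈ ℝ, |S_α(v) − S_α'(v)·v| = α v² (|v|+1)^{α−1} ≤ α · min(v², |v|^{1+α}). -/

import Mathlib

open Real

/-- `S_α(v) = v(|v|+1)^α`. -/
noncomputable def Sa (α v : ℝ) : ℝ := v * (|v| + 1) ^ α

/-- The derivative of `S_α`: `S_α'(v) = (|v|+1)^α + α|v|(|v|+1)^(α−1)`. -/
noncomputable def Sa' (α v : ℝ) : ℝ :=
  (|v| + 1) ^ α + α * |v| * (|v| + 1) ^ (α - 1)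

/-- Auxiliary function: `Sa' α v = gfun α |v|`. -/
noncomputable def gfun (α t : ℝ) : ℝ := (t + 1) ^ α + α * t * (t + 1) ^ (α - 1)

lemma hasDerivAt_gfun (α : ℝ) {t : ℝ} (ht : 0 < t + 1) :
    HasDerivAt (gfun α) (α * (t + 1) ^ (α - 2) * ((1 + α) * t + 2)) t := by
  have hne : t + 1 ≠ 0 := ne_of_gt ht
  have hid : HasDerivAt (fun s : ℝ => s + 1) 1 t := (hasDerivAt_id t).add_const 1
  have h1 : HasDerivAt (fun s : ℝ => (s + 1) ^ α) (α * (t + 1) ^ (α - 1) * 1) t :=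
    ((Real.hasStrictDerivAt_rpow_const (Or.inl hne)).hasDerivAt).comp (h := fun s : ℝ => s + 1) t hid
  have h2 : HasDerivAt (fun s : ℝ => (s + 1) ^ (α - 1)) ((α - 1) * (t + 1) ^ (α - 1 - 1) * 1) t :=
    ((Real.hasStrictDerivAt_rpow_const (Or.inl hne)).hasDerivAt).comp (h := fun s : ℝ => s + 1) t hid
  have h3 : HasDerivAt (fun s : ℝ => α * s) α t := by
    simpa using (hasDerivAt_id t).const_mul α
  have h4 := (h3.mul h2)
  have h5 := h1.add h4
  have key : α * (t + 1) ^ (α - 1) * 1 + (α * (t + 1) ^ (α - 1) +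
      α * t * ((α - 1) * (t + 1) ^ (α - 1 - 1) * 1))
      = α * (t + 1) ^ (α - 2) * ((1 + α) * t + 2) := by
    have e1 : (α - 1 : ℝ) - 1 = α - 2 := by ring
    have e2 : (t + 1) ^ (α - 1) = (t + 1) ^ (α - 2) * (t + 1) := by
      rw [← Real.rpow_add_one hne]; ring_nf
    rw [e1, e2]; ring
  rw [key] at h5
  exact h5

lemma Sa'_eq_gfun (α v : ℝ) : Sa' α v = gfun α |v| := rfl

lemma hasDerivAt_Sa (α : ℝ) (hα : α ∈ Set.Ioo (0:ℝ) 1) (v : ℝ) :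
    HasDerivAt (Sa α) (Sa' α v) v := by
  obtain ⟨hα0, hα1⟩ := hα
  rcases lt_trichotomy v 0 with hv | hv | hv
  · -- v < 0 : Sa α x = x * (1 - x) ^ α near v
    have hne : -v + 1 ≠ 0 := by nlinarith
    have hid : HasDerivAt (fun s : ℝ => -s + 1) (-1) v := by
      simpa using (hasDerivAt_id v).neg.add_const 1
    have h1 : HasDerivAt (fun s : ℝ => (-s + 1) ^ α) (α * (-v + 1) ^ (α - 1) * (-1)) v :=
      ((Real.hasStrictDerivAt_rpow_const (Or.inl hne)).hasDerivAt).comp (h := fun s : ℝ => -s + 1) v hid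
    have h2 := (hasDerivAt_id v).mul h1
    have hev : (fun x : ℝ => x * (-x + 1) ^ α) =ᶠ[nhds v] Sa α := by
      filter_upwards [Iio_mem_nhds hv] with x hx
      have : |x| = -x := abs_of_neg (Set.mem_Iio.mp hx)
      simp only [Sa, this]
    have h3 := h2.congr_of_eventuallyEq hev.symm
    have : Sa' α v = 1 * (-v + 1) ^ α + v * (α * (-v + 1) ^ (α - 1) * (-1)) := by
      rw [Sa', abs_of_neg hv]; ring
    rw [this]; exact h3
  · -- v = 0
    subst hv
    rw [hasDerivAt_iff_tendsto_slope]
    have hc : Filter.Tendsto (fun x : ℝ => (|x| + 1) ^ α) (nhdsWithin 0 {(0:ℝ)}ᶜ) (nhds (Sa' α 0)) := by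
      have : Continuous (fun x : ℝ => (|x| + 1) ^ α) := by
        apply Continuous.rpow_const (by continuity)
        intro x; left; positivity
      have h0 : ((|(0:ℝ)| + 1) ^ α) = Sa' α 0 := by simp [Sa']
      exact h0 ▸ (this.tendsto 0).mono_left nhdsWithin_le_nhds
    refine hc.congr' ?_
    filter_upwards [self_mem_nhdsWithin] with x hx
    have hx0 : x ≠ 0 := hx
    simp [slope, Sa, mul_comm, mul_div_assoc, hx0]
  · -- v > 0
    have hne : v + 1 ≠ 0 := by positivity
    have hid : HasDerivAt (fun s : ℝ => s + 1) 1 v := (hasDerivAt_id v).add_const 1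
    have h1 : HasDerivAt (fun s : ℝ => (s + 1) ^ α) (α * (v + 1) ^ (α - 1) * 1) v :=
      ((Real.hasStrictDerivAt_rpow_const (Or.inl hne)).hasDerivAt).comp (h := fun s : ℝ => s + 1) v hid
    have h2 := (hasDerivAt_id v).mul h1
    have hev : (fun x : ℝ => x * (x + 1) ^ α) =ᶠ[nhds v] Sa α := by
      filter_upwards [Ioi_mem_nhds hv] with x hx
      have : |x| = x := abs_of_pos (Set.mem_Ioi.mp hx)
      simp only [Sa, this]
    have h3 := h2.congr_of_eventuallyEq hev.symm
    have : Sa' α v = 1 * (v + 1) ^ α + v * (α * (v + 1) ^ (α - 1) * 1) := by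
      rw [Sa', abs_of_pos hv]; ring
    rw [this]; exact h3

theorem Sa_regularity (α : ℝ) (hα : α ∈ Set.Ioo (0:ℝ) 1) :
    (∀ v : ℝ, HasDerivAt (Sa α) (Sa' α v) v) ∧
    Continuous (Sa' α) ∧
    (∀ a b : ℝ, |Sa' α a - Sa' α b| ≤ 2 * α * |a - b|) ∧
    (∀ v : ℝ,
      |Sa α v - Sa' α v * v| = α * v ^ 2 * (|v| + 1) ^ (α - 1) ∧
      α * v ^ 2 * (|v| + 1) ^ (α - 1) ≤ α * min (v ^ 2) (|v| ^ (1 + α))) := by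
  obtain ⟨hα0, hα1⟩ := hα
  refine ⟨hasDerivAt_Sa α ⟨hα0, hα1⟩, ?_, ?_, ?_⟩
  · -- continuity of Sa'
    unfold Sa'
    apply Continuous.add
    · exact Continuous.rpow_const (by continuity) (fun x => Or.inl (by positivity))
    · exact (continuous_const.mul continuous_abs).mul
        (Continuous.rpow_const (by continuity) (fun x => Or.inl (by positivity)))
  · -- Lipschitz
    have key : ∀ s t : ℝ, 0 ≤ t → t ≤ s → |gfun α s - gfun α t| ≤ 2 * α * (s - t) := by
      intro s t ht hts
      rcases eq_or_lt_of_le hts with h | h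
      · subst h; simp
      · have hcont : ContinuousOn (gfun α) (Set.Icc t s) := by
          intro x hx
          have hx1 : 0 < x + 1 := by have := hx.1; linarith
          exact (hasDerivAt_gfun α hx1).continuousAt.continuousWithinAt
        obtain ⟨c, hc, hceq⟩ := exists_hasDerivAt_eq_slope (gfun α)
          (fun c => α * (c + 1) ^ (α - 2) * ((1 + α) * c + 2)) h hcont
          (fun x hx => hasDerivAt_gfun α (by have := hx.1; linarith))
        have hc0 : 0 ≤ c := le_trans ht hc.1.le
        have hc1 : (0:ℝ) < c + 1 := by linarith
        have hderiv_nonneg : 0 ≤ α * (c + 1) ^ (α - 2) * ((1 + α) * c + 2) := by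
          have h1 : (0:ℝ) ≤ (c + 1) ^ (α - 2) := Real.rpow_nonneg hc1.le _
          have h2 : (0:ℝ) ≤ (1 + α) * c + 2 := by nlinarith
          positivity
        have hderiv_le : α * (c + 1) ^ (α - 2) * ((1 + α) * c + 2) ≤ 2 * α := by
          have h1 : (1 + α) * c + 2 ≤ 2 * (c + 1) := by nlinarith
          have h2 : (0:ℝ) ≤ (c + 1) ^ (α - 2) := Real.rpow_nonneg hc1.le _
          have h3 : α * (c + 1) ^ (α - 2) * ((1 + α) * c + 2)
              ≤ α * (c + 1) ^ (α - 2) * (2 * (c + 1)) := by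
            apply mul_le_mul_of_nonneg_left h1; positivity
          have h4 : α * (c + 1) ^ (α - 2) * (2 * (c + 1)) = 2 * α * (c + 1) ^ (α - 1) := by
            have : (c + 1) ^ (α - 1) = (c + 1) ^ (α - 2) * (c + 1) := by
              rw [← Real.rpow_add_one hc1.ne']; ring_nf
            rw [this]; ring
          have h5 : (c + 1) ^ (α - 1) ≤ 1 :=
            Real.rpow_le_one_of_one_le_of_nonpos (by linarith) (by linarith)
          calc α * (c + 1) ^ (α - 2) * ((1 + α) * c + 2)
              ≤ 2 * α * (c + 1) ^ (α - 1) := by rw [← h4]; exact h3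
            _ ≤ 2 * α * 1 := by
                apply mul_le_mul_of_nonneg_left h5; positivity
            _ = 2 * α := mul_one _
        have hdiff : gfun α s - gfun α t
            = (α * (c + 1) ^ (α - 2) * ((1 + α) * c + 2)) * (s - t) := by
          have hst : s - t ≠ 0 := by linarith
          rw [eq_div_iff hst] at hceq
          linarith [hceq]
        rw [hdiff, abs_of_nonneg (mul_nonneg hderiv_nonneg (by linarith))]
        apply mul_le_mul_of_nonneg_right hderiv_le (by linarith)
    intro a b
    rw [Sa'_eq_gfun, Sa'_eq_gfun]
    rcases le_total |b| |a| with h | h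
    · refine (key |a| |b| (abs_nonneg b) h).trans ?_
      apply mul_le_mul_of_nonneg_left (abs_sub_abs_le_abs_sub a b); positivity
    · rw [abs_sub_comm]
      refine (key |b| |a| (abs_nonneg a) h).trans ?_
      rw [abs_sub_comm a b]
      apply mul_le_mul_of_nonneg_left (abs_sub_abs_le_abs_sub b a); positivity
  · intro v
    have hp : (0:ℝ) ≤ (|v| + 1) ^ (α - 1) := Real.rpow_nonneg (by positivity) _
    constructor
    · have heq : Sa α v - Sa' α v * v = -(α * (|v| * v) * (|v| + 1) ^ (α - 1)) := by
        rw [Sa, Sa']; ring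
      have hvv : |v| * |v| = v ^ 2 := by rw [← abs_mul, abs_mul_self, sq]
      rw [heq, abs_neg, abs_mul, abs_mul, abs_mul, abs_abs, abs_of_pos hα0,
        abs_of_nonneg hp, ← hvv]
    · have hA : v ^ 2 * (|v| + 1) ^ (α - 1) ≤ v ^ 2 := by
        have h5 : (|v| + 1) ^ (α - 1) ≤ 1 :=
          Real.rpow_le_one_of_one_le_of_nonpos (by linarith [abs_nonneg v]) (by linarith)
        calc v ^ 2 * (|v| + 1) ^ (α - 1) ≤ v ^ 2 * 1 :=
              mul_le_mul_of_nonneg_left h5 (sq_nonneg v)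
          _ = v ^ 2 := mul_one _
      have hB : v ^ 2 * (|v| + 1) ^ (α - 1) ≤ |v| ^ (1 + α) := by
        rcases eq_or_ne v 0 with hv | hv
        · subst hv
          rw [abs_zero, Real.zero_rpow (by positivity : (1:ℝ) + α ≠ 0)]
          simp
        · have habs : (0:ℝ) < |v| := abs_pos.mpr hv
          have h1 : (|v| + 1) ^ (α - 1) ≤ |v| ^ (α - 1) :=
            Real.rpow_le_rpow_of_nonpos habs (by linarith) (by linarith)
          have h2 : |v| ^ (1 + α) = v ^ 2 * |v| ^ (α - 1) := by
            have e : (1:ℝ) + α = 2 + (α - 1) := by ring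
            rw [e, Real.rpow_add habs]
            congr 1
            rw [show ((2:ℝ)) = ((2:ℕ):ℝ) by norm_num, Real.rpow_natCast, sq_abs]
          rw [h2]
          exact mul_le_mul_of_nonneg_left h1 (sq_nonneg v)
      calc α * v ^ 2 * (|v| + 1) ^ (α - 1) = α * (v ^ 2 * (|v| + 1) ^ (α - 1)) := by ring
        _ ≤ α * min (v ^ 2) (|v| ^ (1 + α)) :=
            mul_le_mul_of_nonneg_left (le_min hA hB) hα0.le
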